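/- For every integer n ≥ 0, every real c ≥ 0 and every real t > 0, one has φ_n(t;c) ≤ t^{n/2}/Γ(1 + n/2), with equality when c = 0, i.e. φ_n(t;0) = t^{n/2}/Γ(1 + n/2). Consequently, for every integer n ≥ 1 and every c ≥ 0, lim_{t→0+} φ_n(t;c) = 0. -/
import Mathlib


/-- `φ_n(t;c) = t^{-3/2}/(2√π (n+1)!) ∫_c^∞ e^{-τ²/(4t)} τ (τ-c)^{n+1} dτ`. -/
noncomputable def phi (n : ℕ) (c t : ℝ) : ℝ :=
  t ^ (-(3 : ℝ) / 2) / (2 * Real.sqrt Real.pi * (Nat.factorial (n + 1) : ℝ)) *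
    ∫ τ in Set.Ioi c, Real.exp (-τ ^ 2 / (4 * t)) * τ * (τ - c) ^ (n + 1)

open Real MeasureTheory Set Filter

/-- The value of the Gaussian-moment integral. -/
lemma phi_integral_zero (n : ℕ) {t : ℝ} (ht : 0 < t) :
    ∫ τ in Set.Ioi (0 : ℝ), Real.exp (-τ ^ 2 / (4 * t)) * τ * (τ - 0) ^ (n + 1)
      = (1 / (4 * t)) ^ (-((n : ℝ) + 3) / 2) * (1 / 2) *
        Real.Gamma (((n : ℝ) + 3) / 2) := by
  have h4t : (0 : ℝ) < 4 * t := by linarith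
  have : ∫ τ in Set.Ioi (0 : ℝ), Real.exp (-τ ^ 2 / (4 * t)) * τ * (τ - 0) ^ (n + 1)
      = ∫ τ in Set.Ioi (0 : ℝ), τ ^ ((n : ℝ) + 2) * Real.exp (-(1 / (4 * t)) * τ ^ (2 : ℝ)) := by
    refine setIntegral_congr_fun measurableSet_Ioi (fun τ hτ => ?_)
    have hτ0 : (0 : ℝ) < τ := hτ
    rw [Real.rpow_two]
    have h1 : τ ^ ((n : ℝ) + 2) = τ ^ (n + 2) := by
      rw [show ((n : ℝ) + 2) = ((n + 2 : ℕ) : ℝ) by push_cast; ring, Real.rpow_natCast]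
    rw [h1, sub_zero]
    have : -(1 / (4 * t)) * τ ^ 2 = -τ ^ 2 / (4 * t) := by field_simp
    rw [this]
    ring
  rw [this, integral_rpow_mul_exp_neg_mul_rpow two_pos
    (by linarith [show (0 : ℝ) ≤ (n : ℝ) from Nat.cast_nonneg n] : (-1 : ℝ) < (n : ℝ) + 2)
    (by positivity : (0 : ℝ) < 1 / (4 * t))]
  norm_num
  ring_nf

/-- Equality at `c = 0`. -/
lemma phi_zero_eq (n : ℕ) {t : ℝ} (ht : 0 < t) :
    phi n 0 t = t ^ ((n : ℝ) / 2) / Real.Gamma (1 + (n : ℝ) / 2) := by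
  have h4t : (0 : ℝ) < 4 * t := by linarith
  have hG2 : 0 < Real.Gamma (1 + (n : ℝ) / 2) := Real.Gamma_pos_of_pos (by positivity)
  have hF : (0 : ℝ) < (Nat.factorial (n + 1) : ℝ) := by positivity
  have hsqpi : (0 : ℝ) < Real.sqrt Real.pi := Real.sqrt_pos.mpr Real.pi_pos
  have hP : (0 : ℝ) < (2 : ℝ) ^ ((n : ℝ) + 1) := Real.rpow_pos_of_pos two_pos _
  have hQ : (0 : ℝ) < t ^ ((3 : ℝ) / 2) := Real.rpow_pos_of_pos ht _
  -- duplication formula with s = 1 + n/2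
  have hdup := Real.Gamma_mul_Gamma_add_half (1 + (n : ℝ) / 2)
  rw [show (1 - 2 * (1 + (n : ℝ) / 2)) = -((n : ℝ) + 1) by ring,
      show (1 + (n : ℝ) / 2 + 1 / 2) = ((n : ℝ) + 3) / 2 by ring,
      show (2 * (1 + (n : ℝ) / 2)) = ((n + 2 : ℕ) : ℝ) by push_cast; ring,
      show ((n + 2 : ℕ) : ℝ) = ((n + 1 : ℕ) : ℝ) + 1 by push_cast; ring,
      Real.Gamma_nat_eq_factorial,
      Real.rpow_neg (by norm_num : (0 : ℝ) ≤ 2)] at hdup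
  -- hdup : Γ(1+n/2) * Γ((n+3)/2) = (n+1)! * (2^(n+1))⁻¹ * √π
  have hG3 : Real.Gamma (((n : ℝ) + 3) / 2)
      = (Nat.factorial (n + 1) : ℝ) * ((2 : ℝ) ^ ((n : ℝ) + 1))⁻¹ * Real.sqrt Real.pi
        / Real.Gamma (1 + (n : ℝ) / 2) := by
    rw [eq_div_iff hG2.ne']
    linear_combination hdup
  unfold phi
  rw [phi_integral_zero n ht]
  have hb : (1 / (4 * t)) ^ (-((n : ℝ) + 3) / 2)
      = (2 : ℝ) ^ ((n : ℝ) + 3) * t ^ (((n : ℝ) + 3) / 2) := by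
    rw [show (-((n : ℝ) + 3) / 2) = -(((n : ℝ) + 3) / 2) by ring,
        Real.rpow_neg (by positivity), one_div, Real.inv_rpow h4t.le, inv_inv,
        Real.mul_rpow (by norm_num) ht.le,
        show (4 : ℝ) = (2 : ℝ) ^ (2 : ℝ) by rw [Real.rpow_two]; norm_num,
        ← Real.rpow_mul (by norm_num : (0 : ℝ) ≤ 2),
        show (2 : ℝ) * (((n : ℝ) + 3) / 2) = (n : ℝ) + 3 by ring]
  have h23 : (2 : ℝ) ^ ((n : ℝ) + 3) = 4 * (2 : ℝ) ^ ((n : ℝ) + 1) := by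
    rw [show ((n : ℝ) + 3) = ((n : ℝ) + 1) + 2 by ring, Real.rpow_add two_pos,
        Real.rpow_two]
    ring_nf
  have htsplit : t ^ (((n : ℝ) + 3) / 2) = t ^ ((n : ℝ) / 2) * t ^ ((3 : ℝ) / 2) := by
    rw [← Real.rpow_add ht]
    congr 1; ring
  have htneg : t ^ (-(3 : ℝ) / 2) = (t ^ ((3 : ℝ) / 2))⁻¹ := by
    rw [show (-(3 : ℝ) / 2) = -((3 : ℝ) / 2) by ring, Real.rpow_neg ht.le]
  rw [hb, h23, htsplit, htneg, hG3]
  field_simp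
  ring

/-- The dominating function is integrable on `Ioi 0`. -/
lemma g_integrable (n : ℕ) {t : ℝ} (ht : 0 < t) :
    IntegrableOn (fun τ : ℝ => τ ^ ((n : ℝ) + 2) * Real.exp (-(1 / (4 * t)) * τ ^ 2))
      (Set.Ioi 0) := by
  exact integrableOn_rpow_mul_exp_neg_mul_sq (by positivity)
    (by linarith [show (0 : ℝ) ≤ (n : ℝ) from Nat.cast_nonneg n])

lemma f_le_g {n : ℕ} {c t : ℝ} (hc : 0 ≤ c) {τ : ℝ} (hτ : τ ∈ Set.Ioi c) :
    Real.exp (-τ ^ 2 / (4 * t)) * τ * (τ - c) ^ (n + 1)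
      ≤ τ ^ ((n : ℝ) + 2) * Real.exp (-(1 / (4 * t)) * τ ^ 2) := by
  have hτc : c < τ := hτ
  have hτ0 : 0 < τ := lt_of_le_of_lt hc hτc
  have hexp : -(1 / (4 * t)) * τ ^ 2 = -τ ^ 2 / (4 * t) := by
    rw [neg_mul, neg_div, one_div, inv_mul_eq_div]
  rw [hexp]
  have hr : τ ^ ((n : ℝ) + 2) = τ ^ (n + 2) := by
    rw [show ((n : ℝ) + 2) = ((n + 2 : ℕ) : ℝ) by push_cast; ring, Real.rpow_natCast]
  rw [hr]
  have hpow : (τ - c) ^ (n + 1) ≤ τ ^ (n + 1) :=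
    pow_le_pow_left₀ (by linarith) (by linarith) _
  calc Real.exp (-τ ^ 2 / (4 * t)) * τ * (τ - c) ^ (n + 1)
      ≤ Real.exp (-τ ^ 2 / (4 * t)) * τ * τ ^ (n + 1) := by
        exact mul_le_mul_of_nonneg_left hpow
          (mul_nonneg (Real.exp_nonneg _) hτ0.le)
    _ = τ ^ (n + 2) * Real.exp (-τ ^ 2 / (4 * t)) := by ring

lemma f_nonneg {n : ℕ} {c t : ℝ} (hc : 0 ≤ c) {τ : ℝ} (hτ : τ ∈ Set.Ioi c) :
    0 ≤ Real.exp (-τ ^ 2 / (4 * t)) * τ * (τ - c) ^ (n + 1) := by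
  have hτc : c < τ := hτ
  have hτ0 : 0 < τ := lt_of_le_of_lt hc hτc
  have h1 : (0 : ℝ) ≤ (τ - c) ^ (n + 1) := pow_nonneg (by linarith) _
  exact mul_nonneg (mul_nonneg (Real.exp_nonneg _) hτ0.le) h1

lemma f_integrable (n : ℕ) {c t : ℝ} (hc : 0 ≤ c) (ht : 0 < t) :
    IntegrableOn (fun τ : ℝ => Real.exp (-τ ^ 2 / (4 * t)) * τ * (τ - c) ^ (n + 1))
      (Set.Ioi c) := by
  refine Integrable.mono' ((g_integrable n ht).mono_set (Set.Ioi_subset_Ioi hc)) ?_ ?_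
  · exact (Continuous.mul ((Real.continuous_exp.comp (by continuity)).mul continuous_id)
      (by continuity)).aestronglyMeasurable
  · filter_upwards [ae_restrict_mem measurableSet_Ioi] with τ hτ
    rw [Real.norm_eq_abs, abs_of_nonneg (f_nonneg hc hτ)]
    exact f_le_g hc hτ

lemma phi_nonneg (n : ℕ) {c t : ℝ} (hc : 0 ≤ c) (ht : 0 < t) : 0 ≤ phi n c t := by
  unfold phi
  have hsqpi : (0 : ℝ) < Real.sqrt Real.pi := Real.sqrt_pos.mpr Real.pi_pos
  have h1 : (0 : ℝ) ≤ t ^ (-(3 : ℝ) / 2) := Real.rpow_nonneg ht.le _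
  have h2 : (0 : ℝ) ≤
      ∫ τ in Set.Ioi c, Real.exp (-τ ^ 2 / (4 * t)) * τ * (τ - c) ^ (n + 1) :=
    setIntegral_nonneg measurableSet_Ioi (fun τ hτ => f_nonneg hc hτ)
  exact mul_nonneg (div_nonneg h1 (by positivity)) h2

lemma phi_le (n : ℕ) {c t : ℝ} (hc : 0 ≤ c) (ht : 0 < t) :
    phi n c t ≤ t ^ ((n : ℝ) / 2) / Real.Gamma (1 + (n : ℝ) / 2) := by
  rw [← phi_zero_eq n ht]
  unfold phi
  have hsqpi : (0 : ℝ) < Real.sqrt Real.pi := Real.sqrt_pos.mpr Real.pi_pos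
  have hC : (0 : ℝ) ≤ t ^ (-(3 : ℝ) / 2) / (2 * Real.sqrt Real.pi *
      (Nat.factorial (n + 1) : ℝ)) := by
    have := Real.rpow_nonneg ht.le (-(3 : ℝ) / 2)
    positivity
  refine mul_le_mul_of_nonneg_left ?_ hC
  have hgcong : ∀ τ ∈ Set.Ioi (0 : ℝ),
      τ ^ ((n : ℝ) + 2) * Real.exp (-(1 / (4 * t)) * τ ^ 2)
        = Real.exp (-τ ^ 2 / (4 * t)) * τ * (τ - 0) ^ (n + 1) := by
    intro τ hτ
    have hτ0 : (0 : ℝ) < τ := hτ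
    have hexp : -(1 / (4 * t)) * τ ^ 2 = -τ ^ 2 / (4 * t) := by
      rw [neg_mul, neg_div, one_div, inv_mul_eq_div]
    have hr : τ ^ ((n : ℝ) + 2) = τ ^ (n + 2) := by
      rw [show ((n : ℝ) + 2) = ((n + 2 : ℕ) : ℝ) by push_cast; ring, Real.rpow_natCast]
    rw [hexp, hr, sub_zero]
    ring
  calc (∫ τ in Set.Ioi c, Real.exp (-τ ^ 2 / (4 * t)) * τ * (τ - c) ^ (n + 1))
      ≤ ∫ τ in Set.Ioi c, τ ^ ((n : ℝ) + 2) * Real.exp (-(1 / (4 * t)) * τ ^ 2) := by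
        refine setIntegral_mono_on (f_integrable n hc ht)
          ((g_integrable n ht).mono_set (Set.Ioi_subset_Ioi hc)) measurableSet_Ioi
          (fun τ hτ => f_le_g hc hτ)
    _ ≤ ∫ τ in Set.Ioi (0 : ℝ), τ ^ ((n : ℝ) + 2) * Real.exp (-(1 / (4 * t)) * τ ^ 2) := by
        refine setIntegral_mono_set (g_integrable n ht) ?_
          (HasSubset.Subset.eventuallyLE (Set.Ioi_subset_Ioi hc))
        filter_upwards [ae_restrict_mem measurableSet_Ioi] with τ hτ
        have hτ0 : (0 : ℝ) < τ := hτ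
        positivity
    _ = ∫ τ in Set.Ioi (0 : ℝ), Real.exp (-τ ^ 2 / (4 * t)) * τ * (τ - 0) ^ (n + 1) :=
        setIntegral_congr_fun measurableSet_Ioi hgcong

/-- `φ_n(t;c) ≤ t^{n/2}/Γ(1 + n/2)` for `c ≥ 0`, `t > 0`, with equality when `c = 0`;
consequently `φ_n(t;c) → 0` as `t → 0+` for `n ≥ 1`. -/
theorem phi_bound_and_limit :
    (∀ (n : ℕ) (c t : ℝ), 0 ≤ c → 0 < t →
      phi n c t ≤ t ^ ((n : ℝ) / 2) / Real.Gamma (1 + (n : ℝ) / 2)) ∧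
    (∀ (n : ℕ) (t : ℝ), 0 < t →
      phi n 0 t = t ^ ((n : ℝ) / 2) / Real.Gamma (1 + (n : ℝ) / 2)) ∧
    (∀ (n : ℕ), 1 ≤ n → ∀ c : ℝ, 0 ≤ c →
      Filter.Tendsto (fun t => phi n c t) (nhdsWithin 0 (Set.Ioi 0)) (nhds 0)) := by
  refine ⟨fun n c t hc ht => phi_le n hc ht, fun n t ht => phi_zero_eq n ht, ?_⟩
  intro n hn c hc
  have hG2 : 0 < Real.Gamma (1 + (n : ℝ) / 2) := Real.Gamma_pos_of_pos (by positivity)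
  have hpos : (0 : ℝ) < (n : ℝ) / 2 := by
    have : (1 : ℝ) ≤ (n : ℝ) := by exact_mod_cast hn
    linarith
  have hbound : Tendsto (fun t : ℝ => t ^ ((n : ℝ) / 2) / Real.Gamma (1 + (n : ℝ) / 2))
      (nhdsWithin 0 (Set.Ioi 0)) (nhds 0) := by
    have h1 : Tendsto (fun t : ℝ => t ^ ((n : ℝ) / 2)) (nhds 0) (nhds 0) := by
      have := (Real.continuousAt_rpow_const 0 ((n : ℝ) / 2) (Or.inr hpos.le)).tendsto
      rwa [Real.zero_rpow hpos.ne'] at this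
    have h2 : Tendsto (fun t : ℝ => t ^ ((n : ℝ) / 2) / Real.Gamma (1 + (n : ℝ) / 2))
        (nhdsWithin 0 (Set.Ioi 0)) (nhds (0 / Real.Gamma (1 + (n : ℝ) / 2))) :=
      (h1.mono_left nhdsWithin_le_nhds).div_const _
    rwa [zero_div] at h2
  refine squeeze_zero' ?_ ?_ hbound
  · filter_upwards [self_mem_nhdsWithin] with t ht
    exact phi_nonneg n hc ht
  · filter_upwards [self_mem_nhdsWithin] with t ht
    exact phi_le n hc ht
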